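/- Let k ≥ 3 be an integer and ε = ±1. Then the orthogonal direct sum [3ε/2^k] ⊕ [3ε/2^k] on (ℤ/2^kℤ)² is isomorphic, as a pairing, to [−ε/2^k] ⊕ [−ε/2^k]. -/

import Mathlib

lemma sq7 : ∀ k, 3 ≤ k → ∃ s : ℤ, (2:ℤ)^k ∣ s^2 + 7 := by
  intro k
  induction k with
  | zero => omega
  | succ n ih =>
    intro hk
    rcases Nat.lt_or_ge n 3 with h | h
    · have hn : n = 2 := by omega
      subst hn
      exact ⟨1, by norm_num⟩
    · obtain ⟨s, t, ht⟩ := ih h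
      obtain ⟨m, rfl⟩ : ∃ m, n = m + 3 := ⟨n - 3, by omega⟩
      have h2 : (2:ℤ) ∣ s^2 + 7 := Dvd.dvd.trans ⟨2^(m+2), by ring⟩ ⟨t, ht⟩
      have hodd : Odd (s^2) := by
        obtain ⟨r, hr⟩ := h2
        exact ⟨r - 4, by omega⟩
      have hsodd : Odd s := by
        rcases Int.odd_pow.mp hodd with h | h
        · exact h
        · omega
      rcases Int.even_or_odd t with hte | hto
      · obtain ⟨u, hu⟩ := hte
        exact ⟨s, u, by linear_combination ht + 2^(m+3) * hu⟩
      · obtain ⟨u, hu⟩ := (hto.add_odd hsodd)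
        exact ⟨s + 2^(m+2), u + 2^m, by linear_combination ht + 2^(m+3) * hu⟩

lemma key (k : ℕ) (a b : ℤ) (h : (2:ℤ)^k ∣ a - b) :
    (((a : ℚ) / (2:ℚ)^k : ℚ) : AddCircle (1:ℚ)) = (((b:ℚ) / (2:ℚ)^k : ℚ) : AddCircle (1:ℚ)) := by
  obtain ⟨c, hc⟩ := h
  have h2 : ((2:ℚ)^k) ≠ 0 := by positivity
  have hq : (a:ℚ) / 2^k = (b:ℚ) / 2^k + c := by
    have : (a:ℚ) = (b:ℚ) + 2^k * c := by exact_mod_cast (by linarith : a = b + 2^k * c)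
    rw [this]; field_simp
  rw [hq]
  have : (((b:ℚ)/2^k + c : ℚ) : AddCircle (1:ℚ)) = (((b:ℚ)/2^k : ℚ) : AddCircle (1:ℚ)) + ((c:ℚ) : AddCircle (1:ℚ)) := rfl
  rw [this, show ((c:ℚ) : AddCircle (1:ℚ)) = 0 from (AddCircle.coe_eq_zero_iff _).mpr ⟨c, by simp⟩, add_zero]



/-- The pairing `[b/p^k]` on `ℤ/p^kℤ`, sending `([v],[v'])` to
`b·v·v'/p^k mod ℤ`, computed on the canonical representatives `val`. -/
noncomputable def lpk (p k : ℕ) (b : ℤ) (v w : ZMod (p ^ k)) : AddCircle (1 : ℚ) :=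
  ((((b * (v.val : ℤ) * (w.val : ℤ) : ℤ) : ℚ) / ((p : ℚ) ^ k) : ℚ) : AddCircle (1 : ℚ))

lemma lpk_eq (k : ℕ) (b : ℤ) (v w : ZMod (2 ^ k)) :
    lpk 2 k b v w =
      (((b * (v.val : ℤ) * (w.val : ℤ) : ℚ) / (2:ℚ)^k : ℚ) : AddCircle (1:ℚ)) := by
  unfold lpk
  norm_num

/-- For `k ≥ 3` and `ε = ±1`, the pairing
`[3ε/2^k] ⊕ [3ε/2^k]` on `(ℤ/2^kℤ)²` is isomorphic to `[−ε/2^k] ⊕ [−ε/2^k]`. -/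
theorem stmt7 (k : ℕ) (hk : 3 ≤ k) (ε : ℤ) (hε : ε = 1 ∨ ε = -1) :
    ∃ f : (ZMod (2 ^ k) × ZMod (2 ^ k)) ≃+ (ZMod (2 ^ k) × ZMod (2 ^ k)),
      ∀ x y : ZMod (2 ^ k) × ZMod (2 ^ k),
        lpk 2 k (-ε) (f x).1 (f y).1 + lpk 2 k (-ε) (f x).2 (f y).2 =
          lpk 2 k (3 * ε) x.1 y.1 + lpk 2 k (3 * ε) x.2 y.2 := by
  haveI : NeZero ((2:ℕ)^k) := ⟨by positivity⟩
  obtain ⟨s, hs⟩ := sq7 k hk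
  set a : ZMod (2^k) := ((s : ℤ) : ZMod (2^k)) with ha
  have hA : a^2 = -7 := by
    have h0 : ((s^2 + 7 : ℤ) : ZMod (2^k)) = 0 := by
      rw [ZMod.intCast_zmod_eq_zero_iff_dvd]
      exact_mod_cast hs
    push_cast at h0
    linear_combination h0
  -- a^2 + 4 is a unit (it equals -3)
  have hunit : IsUnit (a^2 + 4) := by
    have : a^2 + 4 = -3 := by linear_combination hA
    rw [this]
    have h3 : IsUnit ((3:ℕ) : ZMod (2^k)) := by
      rw [ZMod.isUnit_iff_coprime]
      exact Nat.Coprime.pow_right k (by decide)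
    simpa using h3.neg
  obtain ⟨u, hu⟩ := hunit.exists_left_inv
  let E : (ZMod (2 ^ k) × ZMod (2 ^ k)) ≃+ (ZMod (2 ^ k) × ZMod (2 ^ k)) :=
    AddEquiv.mk' ⟨fun p => (a * p.1 - 2 * p.2, 2 * p.1 + a * p.2),
      fun p => (u * (a * p.1 + 2 * p.2), u * (-2 * p.1 + a * p.2)),
      fun p => by
        apply Prod.ext
        · show u * (a * (a * p.1 - 2 * p.2) + 2 * (2 * p.1 + a * p.2)) = p.1
          linear_combination p.1 * hu
        · show u * (-2 * (a * p.1 - 2 * p.2) + a * (2 * p.1 + a * p.2)) = p.2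
          linear_combination p.2 * hu,
      fun p => by
        apply Prod.ext
        · show a * (u * (a * p.1 + 2 * p.2)) - 2 * (u * (-2 * p.1 + a * p.2)) = p.1
          linear_combination p.1 * hu
        · show 2 * (u * (a * p.1 + 2 * p.2)) + a * (u * (-2 * p.1 + a * p.2)) = p.2
          linear_combination p.2 * hu⟩
      (fun p q => by
        apply Prod.ext <;> simp [Prod.fst_add, Prod.snd_add] <;> ring)
  refine ⟨E, ?_⟩
  intro x y
  have hf1 : ∀ p : ZMod (2^k) × ZMod (2^k), (E p).1 = a * p.1 - 2 * p.2 := fun p => rfl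
  have hf2 : ∀ p : ZMod (2^k) × ZMod (2^k), (E p).2 = 2 * p.1 + a * p.2 := fun p => rfl
  rw [lpk_eq, lpk_eq, lpk_eq, lpk_eq]
  have hadd : ∀ q1 q2 : ℚ,
      ((q1 : AddCircle (1:ℚ)) + (q2 : AddCircle (1:ℚ))) = ((q1 + q2 : ℚ) : AddCircle (1:ℚ)) :=
    fun _ _ => rfl
  rw [hadd, hadd, ← add_div, ← add_div]
  set a1 : ℤ := ((E x).1.val : ℤ)
  set a2 : ℤ := ((E x).2.val : ℤ)
  set b1 : ℤ := ((E y).1.val : ℤ)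
  set b2 : ℤ := ((E y).2.val : ℤ)
  set c1 : ℤ := (x.1.val : ℤ)
  set c2 : ℤ := (x.2.val : ℤ)
  set d1 : ℤ := (y.1.val : ℤ)
  set d2 : ℤ := (y.2.val : ℤ)
  have e1 : (((-ε : ℤ) : ℚ) * (a1 : ℚ) * (b1 : ℚ) + ((-ε : ℤ) : ℚ) * (a2 : ℚ) * (b2 : ℚ))
      = (((-ε * a1 * b1 + -ε * a2 * b2 : ℤ) : ℚ)) := by push_cast; ring
  have e2 : (((3 * ε : ℤ) : ℚ) * (c1 : ℚ) * (d1 : ℚ) + ((3 * ε : ℤ) : ℚ) * (c2 : ℚ) * (d2 : ℚ))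
      = (((3 * ε * c1 * d1 + 3 * ε * c2 * d2 : ℤ) : ℚ)) := by push_cast; ring
  rw [e1, e2]
  apply key
  have h0 : (((-ε * a1 * b1 + -ε * a2 * b2) - (3 * ε * c1 * d1 + 3 * ε * c2 * d2) : ℤ)
      : ZMod (2^k)) = 0 := by
    simp only [a1, a2, b1, b2, c1, c2, d1, d2]
    push_cast [ZMod.natCast_val, ZMod.cast_id]
    rw [hf1, hf2, hf1, hf2]
    linear_combination (-(ε : ZMod (2^k))) * (x.1 * y.1 + x.2 * y.2) * hA
  have := (ZMod.intCast_zmod_eq_zero_iff_dvd _ (2^k)).mp h0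
  exact_mod_cast this
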